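/- Let d ≥ 2. (a) If Γ is a prime undirected multigraph with χ(Γ) = d in which every vertex has valency at least 3, then Γ has at most 2d − 2 vertices and at most 3d − 3 edges. (b) If Q is a quiver with no oriented cycles obtained from such a graph Γ by choosing an orientation for some of the edges and replacing each of the remaining edges by a length-two path consisting of two arrows pointing to a new middle vertex (a sink), then |Q0| ≤ 5(d − 1) and |Q1| ≤ 6(d − 1). -/

import Mathlib

/-- The quiver has an oriented cycle. -/
def HasOrientedCycle {V A : Type} (s t : A → V) : Prop :=
  ∃ (n : ℕ) (f : Fin (n + 1) → A), ∀ i : Fin (n + 1), t (f i) = s (f (i + 1))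

/-- The simple graph underlying an undirected multigraph with edge-end map `ends`. -/
def mgraphAdj {V E : Type} (ends : E → Sym2 V) : SimpleGraph V :=
  SimpleGraph.fromRel (fun v w => ∃ e : E, ends e = s(v, w))

open Classical in
/-- The valency of a vertex of a multigraph: the number of edge-endpoints incident to
it (a loop counts twice). -/
noncomputable def mdeg {V E : Type} [Fintype E] (ends : E → Sym2 V) (v : V) : ℕ :=
  ∑ e : E, (if ends e = s(v, v) then 2 else if v ∈ ends e then 1 else 0)

/-- All endpoints of the edge `e` lie in `S`. -/
def EdgeWithin {V E : Type} (ends : E → Sym2 V) (S : Set V) (e : E) : Prop :=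
  ∀ x ∈ ends e, x ∈ S

/-- A connected undirected multigraph with at least one edge is prime if it is not the
union of two full proper subgraphs having exactly one common vertex. -/
def MultigraphPrime {V E : Type} (ends : E → Sym2 V) : Prop :=
  (mgraphAdj ends).Connected ∧ Nonempty E ∧
    ¬ ∃ S T : Set V, S ∪ T = Set.univ ∧ S ≠ Set.univ ∧ T ≠ Set.univ ∧
      (∃ v : V, S ∩ T = {v}) ∧ ∀ e : E, EdgeWithin ends S e ∨ EdgeWithin ends T e

/-- Source map of the quiver obtained from a multigraph by orienting the edges in `D`
(using the labelling `o` of the endpoints) and subdividing each remaining edge by a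
new sink in the middle. -/
def qsrc {V E : Type} [DecidableEq E] (D : Finset E) (o : E → V × V) :
    ({e : E // e ∈ D} ⊕ {e : E // e ∉ D} ⊕ {e : E // e ∉ D}) → (V ⊕ {e : E // e ∉ D})
  | .inl e => .inl (o e.1).1
  | .inr (.inl e) => .inl (o e.1).1
  | .inr (.inr e) => .inl (o e.1).2

/-- Target map of the quiver obtained by orienting the edges in `D` and subdividing
the remaining edges by a new sink. -/
def qtgt {V E : Type} [DecidableEq E] (D : Finset E) (o : E → V × V) :
    ({e : E // e ∈ D} ⊕ {e : E // e ∉ D} ⊕ {e : E // e ∉ D}) → (V ⊕ {e : E // e ∉ D})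
  | .inl e => .inl (o e.1).2
  | .inr (.inl e) => .inr e
  | .inr (.inr e) => .inr e

open Classical in
lemma handshake {V E : Type} [Fintype V] [Fintype E] (ends : E → Sym2 V) :
    ∑ v : V, mdeg ends v = 2 * Fintype.card E := by
  classical
  unfold mdeg
  rw [Finset.sum_comm]
  rw [show (2 * Fintype.card E) = ∑ _e : E, 2 from by
    rw [Finset.sum_const, Finset.card_univ, smul_eq_mul, Nat.mul_comm]]
  apply Finset.sum_congr rfl
  intro e _
  induction ends e using Sym2.ind with
  | _ a b =>
    by_cases hab : a = b
    · subst hab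
      rw [Finset.sum_congr rfl (g := fun v => if v = a then 2 else 0)]
      · simp
      · intro v _
        by_cases hva : v = a
        · subst hva; simp
        · simp [Sym2.eq_iff, hva, Ne.symm hva]
    · rw [Finset.sum_congr rfl
        (g := fun v => (if v = a then 1 else 0) + (if v = b then 1 else 0))]
      · rw [Finset.sum_add_distrib]; simp
      · intro v _
        by_cases hva : v = a
        · subst hva; simp [Sym2.eq_iff, hab, Ne.symm hab]
        · by_cases hvb : v = b
          · subst hvb; simp [Sym2.eq_iff, hab, Ne.symm hab, hva]
          · simp [Sym2.eq_iff, hva, hvb, Ne.symm hva, Ne.symm hvb]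

/-- bounds on prime multigraphs `Γ` with `χ(Γ) = d ≥ 2` and all valencies
at least `3`, and on the quivers obtained from them by orienting some edges and
putting a sink on the remaining edges. -/
theorem stmt9 {V E : Type} [Fintype V] [Fintype E] [DecidableEq V] [DecidableEq E]
    (ends : E → Sym2 V) (d : ℕ) (hd : 2 ≤ d)
    (hchi : Fintype.card E + Nat.card (mgraphAdj ends).ConnectedComponent
      = Fintype.card V + d)
    (hprime : MultigraphPrime ends)
    (hval : ∀ v : V, 3 ≤ mdeg ends v) :
    (Fintype.card V ≤ 2 * d - 2 ∧ Fintype.card E ≤ 3 * d - 3) ∧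
    ∀ (D : Finset E) (o : E → V × V), (∀ e : E, Sym2.mk (o e).1 (o e).2 = ends e) →
      ¬ HasOrientedCycle (qsrc D o) (qtgt D o) →
      Fintype.card (V ⊕ {e : E // e ∉ D}) ≤ 5 * (d - 1) ∧
      Fintype.card ({e : E // e ∈ D} ⊕ {e : E // e ∉ D} ⊕ {e : E // e ∉ D}) ≤ 6 * (d - 1) := by
  
  classical
  obtain ⟨hconn, -, -⟩ := hprime
  -- only one connected component
  have hc1 : Nat.card (mgraphAdj ends).ConnectedComponent = 1 := by
    rw [Nat.card_eq_one_iff_unique]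
    constructor
    · constructor
      intro a b
      refine SimpleGraph.ConnectedComponent.ind₂ (fun u v => ?_) a b
      exact SimpleGraph.ConnectedComponent.sound (hconn.preconnected u v)
    · haveI := hconn.nonempty
      exact ⟨(mgraphAdj ends).connectedComponentMk (Classical.arbitrary V)⟩
  -- handshake: 3|V| ≤ 2|E|
  have h3 : 3 * Fintype.card V ≤ 2 * Fintype.card E := by
    rw [← handshake ends]
    calc 3 * Fintype.card V = ∑ _v : V, 3 := by
          rw [Finset.sum_const, Finset.card_univ, smul_eq_mul, Nat.mul_comm]
      _ ≤ ∑ v : V, mdeg ends v := Finset.sum_le_sum fun v _ => hval v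
  rw [hc1] at hchi
  have hVcard : Fintype.card V ≤ 2 * d - 2 := by omega
  have hEcard : Fintype.card E ≤ 3 * d - 3 := by omega
  refine ⟨⟨hVcard, hEcard⟩, fun D o _ _ => ?_⟩
  have hDle : D.card ≤ Fintype.card E := Finset.card_le_univ D
  have hcompl : Fintype.card {e : E // e ∉ D} = Fintype.card E - D.card := by
    rw [Fintype.card_subtype_compl, Fintype.card_coe]
  constructor
  · rw [Fintype.card_sum, hcompl]; omega
  · rw [Fintype.card_sum, Fintype.card_sum, hcompl, Fintype.card_coe]; omega
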